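/- If F ∈ O_K[[T]] is p-large at n (as defined above) and U ∈ O_K[[T]] is a unit, then UF is also p-large at n. -/

import Mathlib

/-- The threshold valuations `v_i(F)` in the definition of "`p`-large at `n`". -/
def vI (p n e lam : ℕ) (mu : ℚ) (i : ℕ) : ℚ :=
  if i ≤ (lam - p ^ n) % (p ^ n - p ^ (n - 1)) + p ^ (n - 1) then
    mu + (((lam - p ^ n) / (p ^ n - p ^ (n - 1)) : ℕ) : ℚ) + 1 + 1 / (e : ℚ)
  else if i ≤ p ^ n - 1 then
    mu + (((lam - p ^ n) / (p ^ n - p ^ (n - 1)) : ℕ) : ℚ) + 1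
  else if (i - p ^ n) % (p ^ n - p ^ (n - 1)) ≤ (lam - p ^ n) % (p ^ n - p ^ (n - 1)) then
    mu + (((lam - p ^ n) / (p ^ n - p ^ (n - 1)) : ℕ) : ℚ)
      - (((i - p ^ n) / (p ^ n - p ^ (n - 1)) : ℕ) : ℚ) + 1 / (e : ℚ)
  else
    mu + (((lam - p ^ n) / (p ^ n - p ^ (n - 1)) : ℕ) : ℚ)
      - (((i - p ^ n) / (p ^ n - p ^ (n - 1)) : ℕ) : ℚ)

lemma vI_anti (p n e lam : ℕ) (mu : ℚ) (hp : 2 ≤ p) (hn : 1 ≤ n) (he : 1 ≤ e) :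
    ∀ ⦃i i' : ℕ⦄, i ≤ i' → vI p n e lam mu i' ≤ vI p n e lam mu i := by
  intro i i' hii
  have hPP : p ^ (n - 1) < p ^ n := Nat.pow_lt_pow_right (by omega) (by omega)
  simp only [vI]
  set P := p ^ n with hP
  set P' := p ^ (n - 1) with hP'
  set d := P - P' with hd_def
  have hd : 0 < d := by omega
  have hε0 : (0:ℚ) < 1 / (e:ℚ) := by positivity
  have hε1 : (1:ℚ) / (e:ℚ) ≤ 1 := by
    rw [div_le_one (by exact_mod_cast Nat.lt_of_lt_of_le Nat.zero_lt_one he)]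
    exact_mod_cast he
  have hr : (lam - P) % d < d := Nat.mod_lt _ hd
  have hjle : i - P ≤ i' - P := by omega
  have hqle : (i - P) / d ≤ (i' - P) / d := Nat.div_le_div_right hjle
  have hqleQ : (((i - P) / d : ℕ) : ℚ) ≤ (((i' - P) / d : ℕ) : ℚ) := by exact_mod_cast hqle
  have hnn : (0:ℚ) ≤ (((i' - P) / d : ℕ) : ℚ) := Nat.cast_nonneg _
  have hnn' : (0:ℚ) ≤ (((i - P) / d : ℕ) : ℚ) := Nat.cast_nonneg _
  have hard : (lam - P) % d < (i - P) % d → (i' - P) % d ≤ (lam - P) % d →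
      (((i - P) / d : ℕ) : ℚ) + 1 ≤ (((i' - P) / d : ℕ) : ℚ) := by
    intro h1 h2
    have e1 := Nat.div_add_mod (i - P) d
    have e2 := Nat.div_add_mod (i' - P) d
    have hne : (i - P) / d ≠ (i' - P) / d := by
      intro h; rw [h] at e1; omega
    have : (i - P) / d + 1 ≤ (i' - P) / d := by omega
    exact_mod_cast this
  have hm1 : (i - P) % d < d := Nat.mod_lt _ hd
  have hm2 : (i' - P) % d < d := Nat.mod_lt _ hd
  split_ifs <;>
    first
      | linarith
      | omega
      | (exfalso; omega)
      | (have h9 := hard (by omega) (by omega); linarith)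

section
variable {K : Type} [Field K] (v : K → WithTop ℚ)

lemma sum_v_le (hv0 : ∀ x : K, v x = ⊤ ↔ x = 0)
    (hvadd : ∀ x y : K, min (v x) (v y) ≤ v (x + y))
    {α : Type*} (s : Finset α) (f : α → K) (c : WithTop ℚ)
    (h : ∀ x ∈ s, c ≤ v (f x)) : c ≤ v (∑ x ∈ s, f x) := by
  classical
  induction s using Finset.induction_on with
  | empty => rw [Finset.sum_empty, (hv0 0).mpr rfl]; exact le_top
  | @insert a s ha ih =>
      rw [Finset.sum_insert ha]
      exact le_trans (le_min (h a (Finset.mem_insert_self a s))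
        (ih fun x hx => h x (Finset.mem_insert_of_mem hx))) (hvadd _ _)

lemma sum_v_lt (hv0 : ∀ x : K, v x = ⊤ ↔ x = 0)
    (hvadd : ∀ x y : K, min (v x) (v y) ≤ v (x + y))
    {α : Type*} (s : Finset α) (f : α → K) (c : ℚ)
    (h : ∀ x ∈ s, (c : WithTop ℚ) < v (f x)) : (c : WithTop ℚ) < v (∑ x ∈ s, f x) := by
  classical
  induction s using Finset.induction_on with
  | empty => rw [Finset.sum_empty, (hv0 0).mpr rfl]; exact WithTop.coe_lt_top c
  | @insert a s ha ih =>
      rw [Finset.sum_insert ha]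
      exact lt_of_lt_of_le (lt_min (h a (Finset.mem_insert_self a s))
        (ih fun x hx => h x (Finset.mem_insert_of_mem hx))) (hvadd _ _)

lemma v_one (hv0 : ∀ x : K, v x = ⊤ ↔ x = 0)
    (hvmul : ∀ x y : K, v (x * y) = v x + v y) : v (1 : K) = 0 := by
  have h := hvmul 1 1
  rw [one_mul] at h
  cases hv1 : v (1 : K) with
  | top => exact absurd ((hv0 1).mp hv1) one_ne_zero
  | coe a =>
      rw [hv1] at h
      have : a = a + a := by exact_mod_cast h
      have : a = 0 := by linarith
      simp [this]

lemma v_neg (hv0 : ∀ x : K, v x = ⊤ ↔ x = 0)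
    (hvmul : ∀ x y : K, v (x * y) = v x + v y) (y : K) : v (-y) = v y := by
  have hm1 : v (-1 : K) = 0 := by
    have h := hvmul (-1) (-1)
    rw [neg_mul_neg, one_mul, v_one v hv0 hvmul] at h
    cases hv1 : v (-1 : K) with
    | top => exact absurd ((hv0 (-1)).mp hv1) (by norm_num)
    | coe a =>
        rw [hv1] at h
        have : a + a = 0 := by exact_mod_cast h.symm
        have : a = 0 := by linarith
        simp [this]
  calc v (-y) = v ((-1) * y) := by rw [neg_one_mul]
    _ = v (-1) + v y := hvmul _ _
    _ = v y := by rw [hm1, zero_add]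

lemma v_add_eq (hv0 : ∀ x : K, v x = ⊤ ↔ x = 0)
    (hvmul : ∀ x y : K, v (x * y) = v x + v y)
    (hvadd : ∀ x y : K, min (v x) (v y) ≤ v (x + y))
    (x y : K) (c : WithTop ℚ) (hx : v x = c) (hy : c < v y) : v (x + y) = c := by
  have h2 : v (x + y) ≤ c := by
    by_contra hcon
    push_neg at hcon
    have h3 : c < min (v (x + y)) (v (-y)) := by
      rw [v_neg v hv0 hvmul]; exact lt_min hcon hy
    have h4 := lt_of_lt_of_le h3 (hvadd (x + y) (-y))
    rw [show x + y + -y = x by ring, hx] at h4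
    exact lt_irrefl _ h4
  exact le_antisymm h2 (le_trans (le_min (le_of_eq hx.symm) hy.le) (hvadd x y))

end

/-- If `F ∈ O_K[[T]]` is `p`-large at `n` (invariants `μF`, `lF ≥ p^n`; coefficients
`a_i`, `i < lF`, satisfy `v(a_i) ≥ v_i(F)`) and `U ∈ O_K[[T]]` is a unit, then `U·F` is
also `p`-large at `n` (with the same invariants `μF`, `lF`). -/

theorem stmt_12 (p n : ℕ) [Fact p.Prime] (hn : 1 ≤ n)
    (K : Type) [Field K] [Algebra ℚ_[p] K] [FiniteDimensional ℚ_[p] K]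
    (v : K → WithTop ℚ)
    (hv0 : ∀ x : K, v x = ⊤ ↔ x = 0)
    (hvmul : ∀ x y : K, v (x * y) = v x + v y)
    (hvadd : ∀ x y : K, min (v x) (v y) ≤ v (x + y))
    (hvext : ∀ x : ℚ_[p], x ≠ 0 →
      v (algebraMap ℚ_[p] K x) = ((x.valuation : ℚ) : WithTop ℚ))
    (e : ℕ) (he : 0 < e)
    (F U : PowerSeries K)
    (hFint : ∀ i, (0 : WithTop ℚ) ≤ v (PowerSeries.coeff (R := K) i F))
    (hUint : ∀ i, (0 : WithTop ℚ) ≤ v (PowerSeries.coeff (R := K) i U))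
    (hUunit : v (PowerSeries.coeff (R := K) 0 U) = (0 : WithTop ℚ))
    (μF : ℚ) (lF : ℕ)
    (hmu : ∀ i, (μF : WithTop ℚ) ≤ v (PowerSeries.coeff (R := K) i F))
    (hmueq : v (PowerSeries.coeff (R := K) lF F) = (μF : WithTop ℚ))
    (hlam : ∀ i < lF, (μF : WithTop ℚ) < v (PowerSeries.coeff (R := K) i F))
    (hbig : p ^ n ≤ lF)
    (hlarge : ∀ i < lF,
      ((vI p n e lF μF i : ℚ) : WithTop ℚ) ≤ v (PowerSeries.coeff (R := K) i F)) :
    (∀ i, (μF : WithTop ℚ) ≤ v (PowerSeries.coeff (R := K) i (U * F))) ∧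
    v (PowerSeries.coeff (R := K) lF (U * F)) = (μF : WithTop ℚ) ∧
    (∀ i < lF, (μF : WithTop ℚ) < v (PowerSeries.coeff (R := K) i (U * F))) ∧
    (∀ i < lF,
      ((vI p n e lF μF i : ℚ) : WithTop ℚ) ≤ v (PowerSeries.coeff (R := K) i (U * F))) := by
  have hp : 2 ≤ p := (Fact.out : p.Prime).two_le
  have he1 : 1 ≤ e := he
  refine ⟨?_, ?_, ?_, ?_⟩
  · -- μF ≤ v (coeff i (U*F))
    intro i
    rw [PowerSeries.coeff_mul]
    apply sum_v_le v hv0 hvadd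
    intro x _
    rw [hvmul]
    exact le_trans (hmu x.2) (le_add_of_nonneg_left (hUint x.1))
  · -- equality at lF
    rw [PowerSeries.coeff_mul]
    have hmem : ((0 : ℕ), lF) ∈ Finset.HasAntidiagonal.antidiagonal lF := by simp
    rw [← Finset.add_sum_erase _ _ hmem]
    apply v_add_eq v hv0 hvmul hvadd
    · rw [hvmul, hUunit, hmueq, zero_add]
    · apply sum_v_lt v hv0 hvadd
      rintro ⟨a, b⟩ hx
      rw [Finset.mem_erase, Finset.HasAntidiagonal.mem_antidiagonal] at hx
      obtain ⟨hne, hab⟩ := hx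
      have hb : b < lF := by
        rcases Nat.lt_or_ge b lF with h | h
        · exact h
        · exfalso; apply hne; have : b = lF := by omega
          have : a = 0 := by omega
          simp_all
      rw [hvmul]
      exact lt_of_lt_of_le (hlam b hb) (le_add_of_nonneg_left (hUint a))
  · -- strict inequality below lF
    intro i hi
    rw [PowerSeries.coeff_mul]
    apply sum_v_lt v hv0 hvadd
    rintro ⟨a, b⟩ hx
    rw [Finset.HasAntidiagonal.mem_antidiagonal] at hx
    have hb : b < lF := by omega
    rw [hvmul]
    exact lt_of_lt_of_le (hlam b hb) (le_add_of_nonneg_left (hUint a))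
  · -- p-largeness
    intro i hi
    rw [PowerSeries.coeff_mul]
    apply sum_v_le v hv0 hvadd
    rintro ⟨a, b⟩ hx
    rw [Finset.HasAntidiagonal.mem_antidiagonal] at hx
    have hb : b < lF := by omega
    have hbi : b ≤ i := by omega
    rw [hvmul]
    calc ((vI p n e lF μF i : ℚ) : WithTop ℚ)
        ≤ ((vI p n e lF μF b : ℚ) : WithTop ℚ) :=
          WithTop.coe_le_coe.mpr (by exact_mod_cast vI_anti p n e lF μF hp hn he1 hbi)
      _ ≤ v (PowerSeries.coeff (R := K) b F) := hlarge b hb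
      _ ≤ v (PowerSeries.coeff (R := K) a U) + v (PowerSeries.coeff (R := K) b F) :=
          le_add_of_nonneg_left (hUint a)
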